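/- arXiv:cond-mat/0104295 — 4 statements merged into one kernel-verified Lean document; each statement's English description precedes it below -/
import Mathlib

section
/- Let α ∈ (0,1) be fixed and X a real-valued random variable on a probability space (Ω,𝒜,P). Suppose f : ℝ → ℝ satisfies E[(f∘X)⁻] < ∞, f(x) ≤ f(x_{(α)}) for all x < x_{(α)}, and f(x) ≥ f(x_{(α)}) for all x > x_{(α)}. Let A ∈ 𝒜 be an event with P[A] ≥ α and E[|f∘X|·1_A] < ∞. If P[A ∩ {X > x_{(α)}}] = 0 and moreover either P[X < x_{(α)}] = 0, or (P[X < x_{(α)}] > 0, P[(Ω \ A) ∩ {X < x_{(α)}}] = 0, and P[A] = α), then TM_α(f∘X) = E[f∘X | A]. -/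
open MeasureTheory ProbabilityTheory Filter
open scoped Classical

noncomputable section

variable {Ω : Type*} [MeasurableSpace Ω]

/-- Lower α-quantile: inf {x | P[X ≤ x] ≥ α}. -/
def lowerQuantile (P : Measure Ω) (X : Ω → ℝ) (α : ℝ) : ℝ :=
  sInf {x : ℝ | α ≤ (P {ω | X ω ≤ x}).toReal}

/-- Upper α-quantile: inf {x | P[X ≤ x] > α}. -/
def upperQuantile (P : Measure Ω) (X : Ω → ℝ) (α : ℝ) : ℝ :=
  sInf {x : ℝ | α < (P {ω | X ω ≤ x}).toReal}

/-- α-tail mean. -/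
def tailMean (P : Measure Ω) (X : Ω → ℝ) (α : ℝ) : ℝ :=
  α⁻¹ * ((∫ ω in {ω | X ω ≤ lowerQuantile P X α}, X ω ∂P)
    + lowerQuantile P X α * (α - (P {ω | X ω ≤ lowerQuantile P X α}).toReal))

/-- Expected Shortfall. -/
def ES (P : Measure Ω) (X : Ω → ℝ) (α : ℝ) : ℝ := - tailMean P X α

/-- Conditional expectation given an event: E[X | A] = E[X·1_A] / P[A]. -/
def condExpEvent (P : Measure Ω) (X : Ω → ℝ) (A : Set Ω) : ℝ :=
  (∫ ω in A, X ω ∂P) / (P A).toReal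

/-- Lower tail conditional expectation. -/
def TCElow (P : Measure Ω) (X : Ω → ℝ) (α : ℝ) : ℝ :=
  - condExpEvent P X {ω | X ω ≤ lowerQuantile P X α}

/-- Upper tail conditional expectation. -/
def TCEup (P : Measure Ω) (X : Ω → ℝ) (α : ℝ) : ℝ :=
  - condExpEvent P X {ω | X ω ≤ upperQuantile P X α}

/-- Worst conditional expectation. -/
def WCE (P : Measure Ω) (X : Ω → ℝ) (α : ℝ) : ℝ :=
  - sInf {y : ℝ | ∃ A : Set Ω, MeasurableSet A ∧ α < (P A).toReal ∧ y = condExpEvent P X A}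

/-- Conditional value-at-risk. -/
def CVaR (P : Measure Ω) (X : Ω → ℝ) (α : ℝ) : ℝ :=
  sInf {y : ℝ | ∃ s : ℝ, y = (∫ ω, max (-(X ω - s)) 0 ∂P) / α - s}

/-- Modified indicator 1^{(α)}_{X ≤ x}. -/
def modInd (P : Measure Ω) (X : Ω → ℝ) (α x : ℝ) (ω : Ω) : ℝ :=
  if P {a | X a = x} = 0 then Set.indicator {a | X a ≤ x} (fun _ => (1 : ℝ)) ω
  else Set.indicator {a | X a ≤ x} (fun _ => (1 : ℝ)) ω
    + ((α - (P {a | X a ≤ x}).toReal) / (P {a | X a = x}).toReal)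
      * Set.indicator {a | X a = x} (fun _ => (1 : ℝ)) ω

/-- Sum of the k smallest entries of (X 0 ω, ..., X (n-1) ω). -/
def tailSum (Xs : ℕ → Ω → ℝ) (n k : ℕ) (ω : Ω) : ℝ :=
  ((List.insertionSort (· ≤ ·) (List.ofFn fun i : Fin n => Xs i ω)).take k).sum


section QuantileAux

variable {P : Measure Ω} [IsProbabilityMeasure P] {g : Ω → ℝ} {α : ℝ}

private lemma toReal_measure_mono {s t : Set Ω} (h : s ⊆ t) :
    (P s).toReal ≤ (P t).toReal :=
  ENNReal.toReal_mono (measure_ne_top _ _) (measure_mono h)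

lemma exists_cdf_lt (hg : Measurable g) (hα0 : 0 < α) :
    ∃ x : ℝ, (P {ω | g ω ≤ x}).toReal < α := by
  have hanti : Antitone fun n : ℕ => {ω | g ω ≤ -(n : ℝ)} := by
    intro m n hmn ω hω
    simp only [Set.mem_setOf_eq] at hω ⊢
    have : (m : ℝ) ≤ n := Nat.cast_le.2 hmn
    linarith
  have hint : ⋂ n : ℕ, {ω | g ω ≤ -(n : ℝ)} = ∅ := by
    ext ω
    simp only [Set.mem_iInter, Set.mem_setOf_eq, Set.mem_empty_iff_false, iff_false, not_forall]
    obtain ⟨n, hn⟩ := exists_nat_gt (-(g ω))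
    exact ⟨n, by push_neg; linarith⟩
  have htend := tendsto_measure_iInter_atTop
    (fun n => (measurableSet_le hg measurable_const).nullMeasurableSet) hanti
    ⟨0, measure_ne_top P _⟩
  rw [hint, measure_empty] at htend
  have htend2 : Tendsto (fun n : ℕ => (P {ω | g ω ≤ -(n : ℝ)}).toReal) atTop (nhds 0) := by
    simpa [Function.comp_def] using (ENNReal.tendsto_toReal (by simp)).comp htend
  obtain ⟨n, hn⟩ := (htend2.eventually_lt_const hα0).exists
  exact ⟨-(n : ℝ), hn⟩

lemma exists_cdf_ge (hg : Measurable g) (hα1 : α < 1) :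
    ∃ x : ℝ, α ≤ (P {ω | g ω ≤ x}).toReal := by
  have hmono : Monotone fun n : ℕ => {ω | g ω ≤ (n : ℝ)} := by
    intro m n hmn ω hω
    simp only [Set.mem_setOf_eq] at hω ⊢
    have : (m : ℝ) ≤ n := Nat.cast_le.2 hmn
    linarith
  have huni : ⋃ n : ℕ, {ω | g ω ≤ (n : ℝ)} = Set.univ := by
    ext ω
    simp only [Set.mem_iUnion, Set.mem_setOf_eq, Set.mem_univ, iff_true]
    obtain ⟨n, hn⟩ := exists_nat_gt (g ω)
    exact ⟨n, hn.le⟩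
  have htend := tendsto_measure_iUnion_atTop (μ := P) hmono
  rw [huni, measure_univ] at htend
  have htend2 : Tendsto (fun n : ℕ => (P {ω | g ω ≤ (n : ℝ)}).toReal) atTop (nhds 1) := by
    simpa [Function.comp_def] using (ENNReal.tendsto_toReal ENNReal.one_ne_top).comp htend
  obtain ⟨n, hn⟩ := (htend2.eventually_const_lt hα1).exists
  exact ⟨n, hn.le⟩

lemma lq_bddBelow (hg : Measurable g) (hα0 : 0 < α) :
    BddBelow {x : ℝ | α ≤ (P {ω | g ω ≤ x}).toReal} := by
  obtain ⟨x₀, hx₀⟩ := exists_cdf_lt (P := P) hg hα0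
  refine ⟨x₀, fun y hy => ?_⟩
  by_contra hlt
  push_neg at hlt
  have hmon : (P {ω | g ω ≤ y}).toReal ≤ (P {ω | g ω ≤ x₀}).toReal :=
    toReal_measure_mono fun ω h => le_trans h hlt.le
  have : α ≤ (P {ω | g ω ≤ y}).toReal := hy
  linarith

lemma lq_nonempty (hg : Measurable g) (hα1 : α < 1) :
    Set.Nonempty {x : ℝ | α ≤ (P {ω | g ω ≤ x}).toReal} :=
  exists_cdf_ge hg hα1

lemma lowerQuantile_le_of (hg : Measurable g) (hα0 : 0 < α) {x : ℝ}
    (hx : α ≤ (P {ω | g ω ≤ x}).toReal) : lowerQuantile P g α ≤ x :=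
  csInf_le (lq_bddBelow hg hα0) hx

lemma alpha_le_measure_le_lowerQuantile (hg : Measurable g) (hα : α ∈ Set.Ioo (0:ℝ) 1) :
    α ≤ (P {ω | g ω ≤ lowerQuantile P g α}).toReal := by
  obtain ⟨hα0, hα1⟩ := hα
  set q := lowerQuantile P g α with hq
  have hanti : Antitone fun n : ℕ => {ω | g ω ≤ q + 1 / ((n : ℝ) + 1)} := by
    intro m n hmn ω hω
    simp only [Set.mem_setOf_eq] at hω ⊢
    have h1 : 1 / ((n : ℝ) + 1) ≤ 1 / ((m : ℝ) + 1) := by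
      apply one_div_le_one_div_of_le (by positivity)
      have : (m : ℝ) ≤ n := Nat.cast_le.2 hmn
      linarith
    linarith
  have hint : ⋂ n : ℕ, {ω | g ω ≤ q + 1 / ((n : ℝ) + 1)} = {ω | g ω ≤ q} := by
    ext ω
    simp only [Set.mem_iInter, Set.mem_setOf_eq]
    constructor
    · intro h
      by_contra hlt
      push_neg at hlt
      obtain ⟨n, hn⟩ := exists_nat_one_div_lt (sub_pos.2 hlt)
      have := h n
      linarith
    · intro h n
      have : (0:ℝ) < 1 / ((n : ℝ) + 1) := by positivity
      linarith
  have htend := tendsto_measure_iInter_atTop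
    (fun n => (measurableSet_le hg measurable_const).nullMeasurableSet) hanti
    ⟨0, measure_ne_top P _⟩
  rw [hint] at htend
  have htend2 : Tendsto (fun n : ℕ => (P {ω | g ω ≤ q + 1 / ((n : ℝ) + 1)}).toReal) atTop
      (nhds (P {ω | g ω ≤ q}).toReal) :=
    (ENNReal.tendsto_toReal (measure_ne_top P _)).comp htend
  refine ge_of_tendsto htend2 (Eventually.of_forall fun n => ?_)
  have hlt : q < q + 1 / ((n : ℝ) + 1) := by
    have : (0:ℝ) < 1 / ((n : ℝ) + 1) := by positivity
    linarith
  obtain ⟨x, hxS, hxlt⟩ := exists_lt_of_csInf_lt (lq_nonempty hg hα1) hlt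
  calc α ≤ (P {ω | g ω ≤ x}).toReal := hxS
    _ ≤ _ := toReal_measure_mono fun ω h => le_trans h hxlt.le

lemma measure_lt_lowerQuantile_le (hg : Measurable g) (hα : α ∈ Set.Ioo (0:ℝ) 1) :
    (P {ω | g ω < lowerQuantile P g α}).toReal ≤ α := by
  obtain ⟨hα0, hα1⟩ := hα
  set q := lowerQuantile P g α with hq
  have hmono : Monotone fun n : ℕ => {ω | g ω ≤ q - 1 / ((n : ℝ) + 1)} := by
    intro m n hmn ω hω
    simp only [Set.mem_setOf_eq] at hω ⊢
    have h1 : 1 / ((n : ℝ) + 1) ≤ 1 / ((m : ℝ) + 1) := by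
      apply one_div_le_one_div_of_le (by positivity)
      have : (m : ℝ) ≤ n := Nat.cast_le.2 hmn
      linarith
    linarith
  have huni : ⋃ n : ℕ, {ω | g ω ≤ q - 1 / ((n : ℝ) + 1)} = {ω | g ω < q} := by
    ext ω
    simp only [Set.mem_iUnion, Set.mem_setOf_eq]
    constructor
    · rintro ⟨n, hn⟩
      have : (0:ℝ) < 1 / ((n : ℝ) + 1) := by positivity
      linarith
    · intro h
      obtain ⟨n, hn⟩ := exists_nat_one_div_lt (sub_pos.2 h)
      exact ⟨n, by linarith⟩
  have htend := tendsto_measure_iUnion_atTop (μ := P) hmono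
  rw [huni] at htend
  have htend2 : Tendsto (fun n : ℕ => (P {ω | g ω ≤ q - 1 / ((n : ℝ) + 1)}).toReal) atTop
      (nhds (P {ω | g ω < q}).toReal) :=
    (ENNReal.tendsto_toReal (measure_ne_top P _)).comp htend
  refine le_of_tendsto htend2 (Eventually.of_forall fun n => ?_)
  by_contra h
  push_neg at h
  have hmem : q ≤ q - 1 / ((n : ℝ) + 1) := csInf_le (lq_bddBelow hg hα0) h.le
  have : (0:ℝ) < 1 / ((n : ℝ) + 1) := by positivity
  linarith

/-- Core computation: if A agrees with the lower tail of Y up to null sets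
(and either P A = α or the strict lower tail is null), the tail mean equals
the conditional expectation given A. -/
lemma tailMean_eq_condExpEvent_aux (hα : α ∈ Set.Ioo (0:ℝ) 1) {Y : Ω → ℝ}
    (hY : Measurable Y)
    (hint : Integrable (fun ω => max (-(Y ω)) 0) P)
    {A : Set Ω} (hA : MeasurableSet A) (hPApos : 0 < (P A).toReal)
    (hAint : Integrable Y (P.restrict A))
    (h1 : P ({ω | Y ω < lowerQuantile P Y α} \ A) = 0)
    (h2 : P (A \ {ω | Y ω ≤ lowerQuantile P Y α}) = 0)
    (h3 : (P A).toReal = α ∨ P {ω | Y ω < lowerQuantile P Y α} = 0) :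
    tailMean P Y α = condExpEvent P Y A := by
  obtain ⟨hα0, hα1⟩ := hα
  unfold tailMean condExpEvent
  set q := lowerQuantile P Y α with hqdef
  set C := {ω | Y ω ≤ q} with hCdef
  have hCmem : ∀ {ω}, ω ∈ C → Y ω ≤ q := by
    intro ω h
    rw [hCdef] at h
    exact h
  have hCmem' : ∀ {ω}, Y ω ≤ q → ω ∈ C := by
    intro ω h
    rw [hCdef]
    exact h
  have hltmem : ∀ {ω}, ω ∈ {ω | Y ω < q} → Y ω < q := fun h => h
  have hCm : MeasurableSet C := by
    rw [hCdef]
    exact measurableSet_le hY measurable_const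
  have hCα : α ≤ (P C).toReal := alpha_le_measure_le_lowerQuantile hY ⟨hα0, hα1⟩
  -- integrability of Y on C
  have hIC : IntegrableOn Y C P := by
    refine Integrable.mono' (g := fun ω => |q| + max (-(Y ω)) 0)
      ((integrable_const _).add hint.restrict) (hY.aestronglyMeasurable.restrict) ?_
    refine (ae_restrict_iff' hCm).2 (Eventually.of_forall fun ω hω => ?_)
    have hωC : Y ω ≤ q := hCmem hω
    rcases le_or_gt 0 (Y ω) with h | h
    · have : |Y ω| = Y ω := abs_of_nonneg h
      have h2 : (0:ℝ) ≤ max (-(Y ω)) 0 := le_max_right _ _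
      have h3 : Y ω ≤ |q| := le_trans hωC (le_abs_self q)
      simpa [Real.norm_eq_abs, this] using by linarith
    · have : |Y ω| = -(Y ω) := abs_of_neg h
      have h2 : -(Y ω) ≤ max (-(Y ω)) 0 := le_max_left _ _
      have h3 : (0:ℝ) ≤ |q| := abs_nonneg q
      simpa [Real.norm_eq_abs, this] using by linarith
  -- measure bookkeeping
  have hPAC : P (A ∩ C) = P A := by
    have h := measure_inter_add_diff (μ := P) A hCm
    rw [h2, add_zero] at h
    exact h
  have hCsplit : (P C).toReal = (P A).toReal + (P (C \ A)).toReal := by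
    have h := measure_inter_add_diff (μ := P) C hA
    rw [Set.inter_comm, hPAC] at h
    rw [← h, ENNReal.toReal_add (measure_ne_top _ _) (measure_ne_top _ _)]
  -- integral decomposition
  have hAC_eq : (C ∩ A : Set Ω) =ᵐ[P] A := by
    rw [ae_eq_set]
    constructor
    · have : (C ∩ A) \ A = (∅ : Set Ω) := Set.diff_eq_empty.2 Set.inter_subset_right
      rw [this, measure_empty]
    · refine measure_mono_null (fun ω hω => ?_) h2
      exact ⟨hω.1, fun hC => hω.2 ⟨hC, hω.1⟩⟩
  have hdisj : Disjoint (C ∩ A) (C \ A) :=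
    Disjoint.mono_left Set.inter_subset_right disjoint_sdiff_self_right
  have hInt_eq : ∫ ω in C, Y ω ∂P = (∫ ω in A, Y ω ∂P) + q * (P (C \ A)).toReal := by
    have hsplit : ∫ ω in C, Y ω ∂P
        = (∫ ω in C ∩ A, Y ω ∂P) + ∫ ω in C \ A, Y ω ∂P := by
      rw [← setIntegral_union hdisj (hCm.diff hA)
        (hIC.mono_set Set.inter_subset_left) (hIC.mono_set Set.diff_subset),
        Set.inter_union_diff]
    have hae : ∀ᵐ ω ∂P, ω ∈ C \ A → Y ω = q := by
      filter_upwards [measure_eq_zero_iff_ae_notMem.mp h1] with ω hω hmem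
      rcases lt_or_eq_of_le (hCmem hmem.1) with hlt | heq
      · exact absurd (⟨hlt, hmem.2⟩ : ω ∈ {ω | Y ω < q} \ A) hω
      · exact heq
    rw [hsplit, setIntegral_congr_set hAC_eq,
      setIntegral_congr_ae (hCm.diff hA) hae, setIntegral_const, smul_eq_mul, mul_comm]
    rfl
  have hαne : α ≠ 0 := ne_of_gt hα0
  have hane : (P A).toReal ≠ 0 := ne_of_gt hPApos
  show α⁻¹ * ((∫ ω in C, Y ω ∂P) + q * (α - (P C).toReal))
      = (∫ ω in A, Y ω ∂P) / (P A).toReal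
  rcases h3 with hPAα | hnull
  · rw [hInt_eq, hCsplit, hPAα]
    field_simp
    try ring
  · have hae2 : ∀ᵐ ω ∂P, ω ∈ C → Y ω = q := by
      filter_upwards [measure_eq_zero_iff_ae_notMem.mp hnull] with ω hω hmem
      rcases lt_or_eq_of_le (hCmem hmem) with hlt | heq
      · exact absurd (hlt : ω ∈ {ω | Y ω < q}) hω
      · exact heq
    have hae3 : ∀ᵐ ω ∂P, ω ∈ A → Y ω = q := by
      filter_upwards [measure_eq_zero_iff_ae_notMem.mp hnull,
        measure_eq_zero_iff_ae_notMem.mp h2] with ω hω hω2 hmem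
      have hC : ω ∈ C := by
        by_contra hnC
        exact hω2 ⟨hmem, hnC⟩
      rcases lt_or_eq_of_le (hCmem hC) with hlt | heq
      · exact absurd (hlt : ω ∈ {ω | Y ω < q}) hω
      · exact heq
    have hqC : ∫ ω in C, Y ω ∂P = q * (P C).toReal := by
      rw [setIntegral_congr_ae hCm hae2, setIntegral_const, smul_eq_mul, mul_comm]
      rfl
    have hqA : ∫ ω in A, Y ω ∂P = q * (P A).toReal := by
      rw [setIntegral_congr_ae hA hae3, setIntegral_const, smul_eq_mul, mul_comm]
      rfl
    rw [hqC, hqA]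
    field_simp
    try ring

end QuantileAux

/-- Sufficient conditions for equality of the tail mean of f∘X and the
conditional expectation of f∘X given A. -/
theorem tailMean_eq_condExp_of (P : Measure Ω) [IsProbabilityMeasure P] (α : ℝ)
    (hα : α ∈ Set.Ioo (0:ℝ) 1)
    (X : Ω → ℝ) (hX : Measurable X) (f : ℝ → ℝ) (hf : Measurable f)
    (hfint : Integrable (fun ω => max (-(f (X ω))) 0) P)
    (hfle : ∀ x < lowerQuantile P X α, f x ≤ f (lowerQuantile P X α))
    (hfge : ∀ x, lowerQuantile P X α < x → f (lowerQuantile P X α) ≤ f x)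
    (A : Set Ω) (hA : MeasurableSet A) (hPA : α ≤ (P A).toReal)
    (hAint : Integrable (fun ω => |f (X ω)|) (P.restrict A))
    (hAup : P (A ∩ {ω | lowerQuantile P X α < X ω}) = 0)
    (hcond : P {ω | X ω < lowerQuantile P X α} = 0 ∨
      (0 < P {ω | X ω < lowerQuantile P X α} ∧
        P (Aᶜ ∩ {ω | X ω < lowerQuantile P X α}) = 0 ∧ (P A).toReal = α)) :
    tailMean P (fun ω => f (X ω)) α = condExpEvent P (fun ω => f (X ω)) A := by
  obtain ⟨hα0, hα1⟩ := hα
  set q := lowerQuantile P X α with hqdef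
  set Y : Ω → ℝ := fun ω => f (X ω) with hYdef
  have hY : Measurable Y := hf.comp hX
  set qY := lowerQuantile P Y α with hqYdef
  have hPApos : 0 < (P A).toReal := lt_of_lt_of_le hα0 hPA
  have hYval : ∀ ω, Y ω = f (X ω) := fun ω => by rw [hYdef]
  -- basic quantile facts
  have hXq : α ≤ (P {ω | X ω ≤ q}).toReal := by
    rw [hqdef]
    exact alpha_le_measure_le_lowerQuantile hX ⟨hα0, hα1⟩
  have hYα : α ≤ (P {ω | Y ω ≤ qY}).toReal := by
    rw [hqYdef]
    exact alpha_le_measure_le_lowerQuantile hY ⟨hα0, hα1⟩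
  have hsub2 : {ω | X ω ≤ q} ⊆ {ω | Y ω ≤ f q} := by
    intro ω hω
    have hx : X ω ≤ q := hω
    show Y ω ≤ f q
    rcases lt_or_eq_of_le hx with h | h
    · rw [hYval]
      exact hfle _ h
    · rw [hYval, h]
  have hqYle : qY ≤ f q := by
    rw [hqYdef]
    exact lowerQuantile_le_of hY hα0 (le_trans hXq (toReal_measure_mono hsub2))
  have hsublt : ∀ {y : ℝ}, y < f q → {ω | Y ω ≤ y} ⊆ {ω | X ω < q} := by
    intro y hy ω hω
    have hωY : Y ω ≤ y := hω
    rw [hYval] at hωY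
    show X ω < q
    by_contra h
    push_neg at h
    rcases lt_or_eq_of_le h with h' | h'
    · have := hfge _ h'
      linarith
    · rw [← h'] at hωY
      linarith
  have hltsub : {ω | Y ω < qY} ⊆ {ω | X ω < q} := by
    intro ω hω
    have hlt : Y ω < qY := hω
    exact hsublt (lt_of_lt_of_le hlt hqYle) (le_refl (Y ω) : Y ω ≤ Y ω)
  -- A is below q up to a null set
  have hAdiff : P (A \ {ω | X ω ≤ q}) = 0 := by
    refine measure_mono_null ?_ hAup
    intro ω hω
    have hn : ¬ X ω ≤ q := hω.2
    exact ⟨hω.1, (lt_of_not_ge hn : q < X ω)⟩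
  have hAintY : Integrable Y (P.restrict A) := by
    refine Integrable.mono' hAint (hY.aestronglyMeasurable.restrict)
      (Eventually.of_forall fun ω => ?_)
    rw [hYval]
    simp [Real.norm_eq_abs]
  have hgoal : tailMean P Y α = condExpEvent P Y A → tailMean P (fun ω => f (X ω)) α
      = condExpEvent P (fun ω => f (X ω)) A := by
    rw [hYdef]
    exact id
  rcases hcond with h0 | ⟨_, hAc, hPAα⟩
  · -- case P[X < q] = 0
    have hltnull : P {ω | Y ω < qY} = 0 := measure_mono_null hltsub h0
    have hqYeq : qY = f q := by
      refine le_antisymm hqYle ?_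
      by_contra h
      push_neg at h
      have hz : P {ω | Y ω ≤ qY} = 0 := measure_mono_null (hsublt h) h0
      rw [hz] at hYα
      simp at hYα
      linarith
    have h2 : P (A \ {ω | Y ω ≤ qY}) = 0 := by
      refine measure_mono_null ?_ hAdiff
      intro ω hω
      refine ⟨hω.1, fun hle => hω.2 ?_⟩
      have hx : X ω ≤ q := hle
      show Y ω ≤ qY
      rw [hqYeq]
      exact hsub2 hx
    refine hgoal (tailMean_eq_condExpEvent_aux ⟨hα0, hα1⟩ hY ?_ hA hPApos hAintY
      ?_ ?_ (Or.inr ?_))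
    · rw [hYdef]
      exact hfint
    · rw [← hqYdef]
      exact measure_mono_null Set.diff_subset hltnull
    · rw [← hqYdef]
      exact h2
    · rw [← hqYdef]
      exact hltnull
  · -- case P[X < q] > 0, Aᶜ ∩ {X < q} null, P A = α
    have h1 : P ({ω | Y ω < qY} \ A) = 0 := by
      refine measure_mono_null ?_ hAc
      intro ω hω
      exact ⟨hω.2, hltsub hω.1⟩
    have hXltA : P ({ω | X ω < q} \ A) = 0 := by
      refine measure_mono_null ?_ hAc
      intro ω hω
      exact ⟨hω.2, hω.1⟩
    have h2 : P (A \ {ω | Y ω ≤ qY}) = 0 := by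
      rcases eq_or_lt_of_le hqYle with heq | hlt
      · refine measure_mono_null ?_ hAdiff
        intro ω hω
        refine ⟨hω.1, fun hle => hω.2 ?_⟩
        have hx : X ω ≤ q := hle
        show Y ω ≤ qY
        rw [heq]
        exact hsub2 hx
      · -- qY < f q
        have hDsub : {ω | Y ω ≤ qY} ⊆ {ω | X ω < q} := hsublt hlt
        have hXlt_le : (P {ω | X ω < q}).toReal ≤ α := by
          have hsub : {ω | X ω < q} ⊆ A ∪ ({ω | X ω < q} \ A) := by
            intro ω hω
            by_cases hωA : ω ∈ A
            · exact Or.inl hωA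
            · exact Or.inr ⟨hω, hωA⟩
          have hle := le_trans (measure_mono (μ := P) hsub) (measure_union_le _ _)
          rw [hXltA, add_zero] at hle
          calc (P {ω | X ω < q}).toReal ≤ (P A).toReal :=
                ENNReal.toReal_mono (measure_ne_top _ _) hle
            _ = α := hPAα
        have hD_le : (P {ω | Y ω ≤ qY}).toReal ≤ (P {ω | X ω < q}).toReal :=
          toReal_measure_mono hDsub
        have hDeq : (P {ω | Y ω ≤ qY}).toReal = α := le_antisymm (by linarith) hYα
        have hXeq : (P {ω | X ω < q}).toReal = α := le_antisymm hXlt_le (by linarith)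
        -- {X < q} \ {Y ≤ qY} is null
        have hXD : P ({ω | X ω < q} \ {ω | Y ω ≤ qY}) = 0 := by
          have hmeasD : MeasurableSet {ω | Y ω ≤ qY} := measurableSet_le hY measurable_const
          have h := measure_inter_add_diff (μ := P) {ω | X ω < q} hmeasD
          have hinter : {ω | X ω < q} ∩ {ω | Y ω ≤ qY} = {ω | Y ω ≤ qY} :=
            Set.inter_eq_self_of_subset_right hDsub
          rw [hinter] at h
          have htr : (P {ω | Y ω ≤ qY}).toReal
              + (P ({ω | X ω < q} \ {ω | Y ω ≤ qY})).toReal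
              = (P {ω | X ω < q}).toReal := by
            rw [← ENNReal.toReal_add (measure_ne_top P _) (measure_ne_top P _), h]
          rw [hDeq, hXeq] at htr
          have hz : (P ({ω | X ω < q} \ {ω | Y ω ≤ qY})).toReal = 0 := by linarith
          exact ((ENNReal.toReal_eq_zero_iff _).mp hz).resolve_right (measure_ne_top P _)
        -- A \ {X < q} is null
        have hAX : P (A \ {ω | X ω < q}) = 0 := by
          have hmeasX : MeasurableSet {ω | X ω < q} := measurableSet_lt hX measurable_const
          have h := measure_inter_add_diff (μ := P) A hmeasX
          have hXA : (P (A ∩ {ω | X ω < q})).toReal = α := by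
            have h2' := measure_inter_add_diff (μ := P) {ω | X ω < q} hA
            rw [hXltA, add_zero] at h2'
            rw [Set.inter_comm, h2', hXeq]
          have htr : (P (A ∩ {ω | X ω < q})).toReal + (P (A \ {ω | X ω < q})).toReal
              = (P A).toReal := by
            rw [← ENNReal.toReal_add (measure_ne_top P _) (measure_ne_top P _), h]
          rw [hXA, hPAα] at htr
          have hz : (P (A \ {ω | X ω < q})).toReal = 0 := by linarith
          exact ((ENNReal.toReal_eq_zero_iff _).mp hz).resolve_right (measure_ne_top P _)
        -- conclude
        refine measure_mono_null ?_ (measure_union_null hAX hXD)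
        intro ω hω
        by_cases hωX : X ω < q
        · exact Or.inr ⟨(hωX : ω ∈ {ω | X ω < q}), hω.2⟩
        · exact Or.inl ⟨hω.1, hωX⟩
    refine hgoal (tailMean_eq_condExpEvent_aux ⟨hα0, hα1⟩ hY ?_ hA hPApos hAintY
      ?_ ?_ (Or.inl hPAα))
    · rw [hYdef]
      exact hfint
    · rw [← hqYdef]
      exact h1
    · rw [← hqYdef]
      exact h2

end
end

section
/- Let α ∈ (0,1) be fixed and X a real-valued random variable on a probability space (Ω,𝒜,P). Suppose f : ℝ → ℝ satisfies E[(f∘X)⁻] < ∞ and the strict conditions f(x) < f(x_{(α)}) for all x < x_{(α)} and f(x) > f(x_{(α)}) for all x > x_{(α)}. Let A ∈ 𝒜 be an event with P[A] ≥ α and E[|f∘X|·1_A] < ∞. If TM_α(f∘X) = E[f∘X | A], then P[A ∩ {X > x_{(α)}}] = 0, and either P[X < x_{(α)}] = 0, or (P[X < x_{(α)}] > 0, P[(Ω \ A) ∩ {X < x_{(α)}}] = 0, and P[A] = α). -/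
open MeasureTheory ProbabilityTheory Filter
open scoped Classical

noncomputable section

variable {Ω : Type*} [MeasurableSpace Ω]

open scoped ENNReal

lemma lq_set_nonempty (P : Measure Ω) [IsProbabilityMeasure P] (Z : Ω → ℝ) {α : ℝ}
    (hα1 : α < 1) : {x : ℝ | α ≤ (P {ω | Z ω ≤ x}).toReal}.Nonempty := by
  have hmono : Monotone (fun n : ℕ => {ω | Z ω ≤ (n : ℝ)}) := by
    intro m n hmn ω hω
    simp only [Set.mem_setOf_eq] at hω ⊢
    exact le_trans hω (by exact_mod_cast hmn)
  have hUnion : (⋃ n : ℕ, {ω | Z ω ≤ (n : ℝ)}) = Set.univ := by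
    ext ω
    simp only [Set.mem_iUnion, Set.mem_setOf_eq, Set.mem_univ, iff_true]
    exact exists_nat_ge (Z ω)
  have htend := tendsto_measure_iUnion_atTop (μ := P) hmono
  rw [hUnion, measure_univ] at htend
  have hlt : ENNReal.ofReal α < 1 := by
    rw [← ENNReal.ofReal_one]
    exact ENNReal.ofReal_lt_ofReal_iff one_pos |>.mpr hα1
  obtain ⟨n, hn⟩ := (htend.eventually (eventually_gt_nhds hlt)).exists
  simp only [Function.comp_apply] at hn
  refine ⟨(n : ℝ), ?_⟩
  show α ≤ _
  rw [← ENNReal.ofReal_le_iff_le_toReal (measure_ne_top _ _)]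
  exact hn.le

lemma lq_set_bddBelow (P : Measure Ω) [IsProbabilityMeasure P] {Z : Ω → ℝ} (hZ : Measurable Z)
    {α : ℝ} (hα0 : 0 < α) : BddBelow {x : ℝ | α ≤ (P {ω | Z ω ≤ x}).toReal} := by
  have hanti : Antitone (fun n : ℕ => {ω | Z ω ≤ -(n : ℝ)}) := by
    intro m n hmn ω hω
    simp only [Set.mem_setOf_eq] at hω ⊢
    refine le_trans hω ?_
    simp only [neg_le_neg_iff]
    exact_mod_cast hmn
  have hmeas : ∀ n : ℕ, NullMeasurableSet {ω | Z ω ≤ -(n : ℝ)} P :=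
    fun n => (hZ measurableSet_Iic).nullMeasurableSet
  have hInter : (⋂ n : ℕ, {ω | Z ω ≤ -(n : ℝ)}) = ∅ := by
    ext ω
    simp only [Set.mem_iInter, Set.mem_setOf_eq, Set.mem_empty_iff_false, iff_false, not_forall,
      not_le]
    obtain ⟨n, hn⟩ := exists_nat_gt (-(Z ω))
    exact ⟨n, by linarith⟩
  have htend := tendsto_measure_iInter_atTop (μ := P) hmeas hanti ⟨0, measure_ne_top _ _⟩
  rw [hInter, measure_empty] at htend
  have hpos : (0 : ℝ≥0∞) < ENNReal.ofReal α := ENNReal.ofReal_pos.2 hα0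
  obtain ⟨N, hN⟩ := (htend.eventually (eventually_lt_nhds hpos)).exists
  refine ⟨-(N : ℝ), fun x hx => ?_⟩
  by_contra hcon
  push_neg at hcon
  have hsub : P {ω | Z ω ≤ x} ≤ P {ω | Z ω ≤ -(N : ℝ)} :=
    measure_mono fun ω hω => le_trans hω hcon.le
  have : P {ω | Z ω ≤ x} < ENNReal.ofReal α := lt_of_le_of_lt hsub hN
  rw [ENNReal.lt_ofReal_iff_toReal_lt (measure_ne_top _ _)] at this
  exact absurd hx (not_le.mpr this)

lemma measure_le_lq (P : Measure Ω) [IsProbabilityMeasure P] {Z : Ω → ℝ} (hZ : Measurable Z)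
    {α : ℝ} (hα : α ∈ Set.Ioo (0:ℝ) 1) :
    α ≤ (P {ω | Z ω ≤ lowerQuantile P Z α}).toReal := by
  have hne := lq_set_nonempty P Z hα.2
  set q := lowerQuantile P Z α with hq
  have hanti : Antitone (fun n : ℕ => {ω | Z ω ≤ q + 1 / ((n : ℝ) + 1)}) := by
    intro m n hmn ω hω
    simp only [Set.mem_setOf_eq] at hω ⊢
    refine le_trans hω ?_
    have : 1 / ((n : ℝ) + 1) ≤ 1 / ((m : ℝ) + 1) := by
      apply one_div_le_one_div_of_le (by positivity)
      exact_mod_cast Nat.add_le_add_right hmn 1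
    linarith
  have hmeas : ∀ n : ℕ, NullMeasurableSet {ω | Z ω ≤ q + 1 / ((n : ℝ) + 1)} P :=
    fun n => (hZ measurableSet_Iic).nullMeasurableSet
  have hInter : (⋂ n : ℕ, {ω | Z ω ≤ q + 1 / ((n : ℝ) + 1)}) = {ω | Z ω ≤ q} := by
    ext ω
    simp only [Set.mem_iInter, Set.mem_setOf_eq]
    constructor
    · intro h
      refine le_of_forall_pos_le_add fun ε hε => ?_
      obtain ⟨n, hn⟩ := exists_nat_one_div_lt hε
      exact (h n).trans (by linarith)
    · intro h n
      have : (0:ℝ) < 1 / ((n : ℝ) + 1) := by positivity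
      linarith
  have htend := tendsto_measure_iInter_atTop (μ := P) hmeas hanti ⟨0, measure_ne_top _ _⟩
  rw [hInter] at htend
  have hge : ∀ n : ℕ, ENNReal.ofReal α ≤ (P ∘ fun n : ℕ => {ω | Z ω ≤ q + 1 / ((n : ℝ) + 1)}) n := by
    intro n
    have hqlt : q < q + 1 / ((n : ℝ) + 1) := by
      have : (0:ℝ) < 1 / ((n : ℝ) + 1) := by positivity
      linarith
    obtain ⟨x, hxS, hxlt⟩ := exists_lt_of_csInf_lt hne hqlt
    have hsub : P {ω | Z ω ≤ x} ≤ P {ω | Z ω ≤ q + 1 / ((n : ℝ) + 1)} :=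
      measure_mono fun ω hω => le_trans hω hxlt.le
    refine le_trans ?_ hsub
    rw [ENNReal.ofReal_le_iff_le_toReal (measure_ne_top _ _)]
    exact hxS
  have := ge_of_tendsto' htend hge
  rw [← ENNReal.ofReal_le_iff_le_toReal (measure_ne_top _ _)]
  exact this

lemma measure_lt_lq (P : Measure Ω) [IsProbabilityMeasure P] {Z : Ω → ℝ} (hZ : Measurable Z)
    {α : ℝ} (hα : α ∈ Set.Ioo (0:ℝ) 1) :
    (P {ω | Z ω < lowerQuantile P Z α}).toReal ≤ α := by
  have hbdd := lq_set_bddBelow P hZ hα.1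
  set q := lowerQuantile P Z α with hq
  have hmono : Monotone (fun n : ℕ => {ω | Z ω ≤ q - 1 / ((n : ℝ) + 1)}) := by
    intro m n hmn ω hω
    simp only [Set.mem_setOf_eq] at hω ⊢
    refine le_trans hω ?_
    have : 1 / ((n : ℝ) + 1) ≤ 1 / ((m : ℝ) + 1) := by
      apply one_div_le_one_div_of_le (by positivity)
      exact_mod_cast Nat.add_le_add_right hmn 1
    linarith
  have hUnion : (⋃ n : ℕ, {ω | Z ω ≤ q - 1 / ((n : ℝ) + 1)}) = {ω | Z ω < q} := by
    ext ω
    simp only [Set.mem_iUnion, Set.mem_setOf_eq]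
    constructor
    · rintro ⟨n, hn⟩
      have : (0:ℝ) < 1 / ((n : ℝ) + 1) := by positivity
      linarith
    · intro h
      obtain ⟨n, hn⟩ := exists_nat_one_div_lt (sub_pos.mpr h)
      exact ⟨n, by linarith⟩
  have htend := tendsto_measure_iUnion_atTop (μ := P) hmono
  rw [hUnion] at htend
  have hle : ∀ n : ℕ, (P ∘ fun n : ℕ => {ω | Z ω ≤ q - 1 / ((n : ℝ) + 1)}) n ≤ ENNReal.ofReal α := by
    intro n
    have hqlt : q - 1 / ((n : ℝ) + 1) < q := by
      have : (0:ℝ) < 1 / ((n : ℝ) + 1) := by positivity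
      linarith
    have hnot : ¬ α ≤ (P {ω | Z ω ≤ q - 1 / ((n : ℝ) + 1)}).toReal := by
      intro hcon
      exact absurd (csInf_le hbdd hcon) (not_le.mpr hqlt)
    push_neg at hnot
    exact ((ENNReal.lt_ofReal_iff_toReal_lt (measure_ne_top _ _)).mpr hnot).le
  have := le_of_tendsto' htend hle
  exact ENNReal.toReal_le_of_le_ofReal hα.1.le this

lemma null_subset_of_setIntegral_zero {P : Measure Ω} {S U : Set Ω} (hS : MeasurableSet S)
    (hU : U ⊆ S) {g : Ω → ℝ} (hnn : ∀ ω ∈ S, 0 ≤ g ω) (hpos : ∀ ω ∈ U, 0 < g ω)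
    (hint : IntegrableOn g S P) (hzero : ∫ ω in S, g ω ∂P = 0) : P U = 0 := by
  have h0 : g =ᵐ[P.restrict S] 0 :=
    (setIntegral_eq_zero_iff_of_nonneg_ae
      ((ae_restrict_iff' hS).2 (ae_of_all _ hnn)) hint).1 hzero
  have h1 : ∀ᵐ ω ∂P, ω ∈ S → g ω = 0 := (ae_restrict_iff' hS).1 h0
  have h2 : ∀ᵐ ω ∂P, ω ∉ U := h1.mono fun ω h hωU => (hpos ω hωU).ne' (h (hU hωU))
  rw [ae_iff] at h2
  simpa [not_not, Set.setOf_mem_eq] using h2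

lemma integrableOn_of_le_const {P : Measure Ω} [IsProbabilityMeasure P] {Y : Ω → ℝ}
    (hY : AEStronglyMeasurable Y P) (hfint : Integrable (fun ω => max (-(Y ω)) 0) P)
    {T : Set Ω} (hT : MeasurableSet T) {c : ℝ} (hc : ∀ ω ∈ T, Y ω ≤ c) :
    IntegrableOn Y T P := by
  refine Integrable.mono' (((integrable_const |c|).add hfint).restrict) hY.restrict ?_
  refine (ae_restrict_iff' hT).2 (ae_of_all _ fun ω hω => ?_)
  simp only [Pi.add_apply, Real.norm_eq_abs]
  rcases le_total 0 (Y ω) with h | h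
  · rw [abs_of_nonneg h]
    have h1 : (0:ℝ) ≤ max (-(Y ω)) 0 := le_max_right _ _
    have h2 := hc ω hω
    have h3 := le_abs_self c
    linarith
  · rw [abs_of_nonpos h]
    have h1 : -(Y ω) ≤ max (-(Y ω)) 0 := le_max_left _ _
    have h2 : (0:ℝ) ≤ |c| := abs_nonneg c
    linarith

lemma tailMean_formula (P : Measure Ω) [IsProbabilityMeasure P] {α : ℝ}
    (hα : α ∈ Set.Ioo (0:ℝ) 1)
    {X : Ω → ℝ} (hX : Measurable X) {f : ℝ → ℝ} (hf : Measurable f)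
    (hfint : Integrable (fun ω => max (-(f (X ω))) 0) P)
    (hflt : ∀ x < lowerQuantile P X α, f x < f (lowerQuantile P X α))
    (hfgt : ∀ x, lowerQuantile P X α < x → f (lowerQuantile P X α) < f x) :
    tailMean P (fun ω => f (X ω)) α =
      α⁻¹ * ((∫ ω in {ω | X ω ≤ lowerQuantile P X α}, f (X ω) ∂P)
        + f (lowerQuantile P X α) * (α - (P {ω | X ω ≤ lowerQuantile P X α}).toReal)) := by
  set q := lowerQuantile P X α with hqdef
  set c := f q with hcdef
  have hYm : Measurable (fun ω => f (X ω)) := hf.comp hX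
  have hTset : {ω | f (X ω) ≤ c} = {ω | X ω ≤ q} := by
    ext ω; simp only [Set.mem_setOf_eq]
    constructor
    · intro h; by_contra hcon; push_neg at hcon
      exact absurd h (not_le.mpr (hfgt _ hcon))
    · intro h
      rcases lt_or_eq_of_le h with h' | h'
      · exact (hflt _ h').le
      · rw [h']
  have hqX := measure_le_lq P hX hα
  have hq'le : lowerQuantile P (fun ω => f (X ω)) α ≤ c := by
    refine csInf_le (lq_set_bddBelow P hYm hα.1) ?_
    show α ≤ _
    rw [hTset]; exact hqX
  set q' := lowerQuantile P (fun ω => f (X ω)) α with hq'def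
  rcases eq_or_lt_of_le hq'le with hq'c | hq'c
  · show α⁻¹ * ((∫ ω in {ω | f (X ω) ≤ q'}, f (X ω) ∂P)
        + q' * (α - (P {ω | f (X ω) ≤ q'}).toReal)) = _
    rw [hq'c, hTset]
  · have hBsub : {ω | f (X ω) ≤ q'} ⊆ {ω | X ω < q} := by
      intro ω hω
      simp only [Set.mem_setOf_eq] at hω ⊢
      by_contra hcon; push_neg at hcon
      rcases eq_or_lt_of_le hcon with h' | h'
      · rw [← h'] at hω; exact absurd hω (not_le.mpr hq'c)
      · have := hfgt _ h'
        linarith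
    have ht := measure_le_lq P hYm hα
    have hlt' := measure_lt_lq P hX hα
    have hmono : (P {ω | f (X ω) ≤ q'}).toReal ≤ (P {ω | X ω < q}).toReal :=
      ENNReal.toReal_mono (measure_ne_top _ _) (measure_mono hBsub)
    have htα : (P {ω | f (X ω) ≤ q'}).toReal = α := le_antisymm (hmono.trans hlt') ht
    have hXα : (P {ω | X ω < q}).toReal = α := le_antisymm hlt' (ht.trans hmono)
    have hPeq : P {ω | f (X ω) ≤ q'} = P {ω | X ω < q} :=
      (ENNReal.toReal_eq_toReal_iff' (measure_ne_top _ _) (measure_ne_top _ _)).1 (htα.trans hXα.symm)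
    have hdiff : P ({ω | X ω < q} \ {ω | f (X ω) ≤ q'}) = 0 := by
      rw [measure_diff hBsub (hYm measurableSet_Iic).nullMeasurableSet (measure_ne_top _ _),
        hPeq, tsub_self]
    have haeeq : {ω | f (X ω) ≤ q'} =ᵐ[P] {ω | X ω < q} :=
      (MeasureTheory.ae_eq_set).2 ⟨by rw [Set.diff_eq_empty.2 hBsub, measure_empty], hdiff⟩
    have hIB : (∫ ω in {ω | f (X ω) ≤ q'}, f (X ω) ∂P) = ∫ ω in {ω | X ω < q}, f (X ω) ∂P :=
      setIntegral_congr_set haeeq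
    have hsplit : {ω | X ω ≤ q} = {ω | X ω < q} ∪ {ω | X ω = q} := by
      ext ω; simp only [Set.mem_setOf_eq, Set.mem_union]; exact le_iff_lt_or_eq
    have hmeq : MeasurableSet {ω | X ω = q} := hX (measurableSet_singleton q)
    have hdisj : Disjoint {ω | X ω < q} {ω | X ω = q} := by
      rw [Set.disjoint_left]; intro ω h1 h2
      simp only [Set.mem_setOf_eq] at h1 h2
      exact absurd h2 (ne_of_lt h1)
    have hintlt : IntegrableOn (fun ω => f (X ω)) {ω | X ω < q} P :=
      integrableOn_of_le_const hYm.aestronglyMeasurable hfint (hX measurableSet_Iio)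
        (fun ω hω => (hflt _ hω).le)
    have hinteq : IntegrableOn (fun ω => f (X ω)) {ω | X ω = q} P :=
      integrableOn_of_le_const hYm.aestronglyMeasurable hfint hmeq
        (fun ω hω => le_of_eq (by rw [Set.mem_setOf_eq] at hω; rw [hω]))
    have hIT : (∫ ω in {ω | X ω ≤ q}, f (X ω) ∂P)
        = (∫ ω in {ω | X ω < q}, f (X ω) ∂P) + ∫ ω in {ω | X ω = q}, f (X ω) ∂P := by
      rw [hsplit]; exact setIntegral_union hdisj hmeq hintlt hinteq
    have hIeq : (∫ ω in {ω | X ω = q}, f (X ω) ∂P) = c * (P {ω | X ω = q}).toReal := by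
      have heqon : Set.EqOn (fun ω => f (X ω)) (fun _ => c) {ω | X ω = q} := by
        intro ω hω
        rw [Set.mem_setOf_eq] at hω
        show f (X ω) = c
        rw [hω]
      rw [setIntegral_congr_fun hmeq heqon, setIntegral_const, smul_eq_mul, mul_comm, measureReal_def]
    have hPeq2 : (P {ω | X ω = q}).toReal = (P {ω | X ω ≤ q}).toReal - α := by
      have hm : P {ω | X ω ≤ q} = P {ω | X ω < q} + P {ω | X ω = q} := by
        rw [hsplit]; exact measure_union hdisj hmeq
      rw [hm, ENNReal.toReal_add (measure_ne_top _ _) (measure_ne_top _ _), hXα]; ring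
    show α⁻¹ * ((∫ ω in {ω | f (X ω) ≤ q'}, f (X ω) ∂P)
        + q' * (α - (P {ω | f (X ω) ≤ q'}).toReal)) = _
    rw [hIB, htα, hIT, hIeq, hPeq2]
    ring

/-- Necessity of the conditions for equality of the tail mean of f∘X and the
conditional expectation of f∘X given A, when f is strictly separating at the quantile. -/
theorem tailMean_eq_condExp_necessary (P : Measure Ω) [IsProbabilityMeasure P] (α : ℝ)
    (hα : α ∈ Set.Ioo (0:ℝ) 1)
    (X : Ω → ℝ) (hX : Measurable X) (f : ℝ → ℝ) (hf : Measurable f)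
    (hfint : Integrable (fun ω => max (-(f (X ω))) 0) P)
    (hflt : ∀ x < lowerQuantile P X α, f x < f (lowerQuantile P X α))
    (hfgt : ∀ x, lowerQuantile P X α < x → f (lowerQuantile P X α) < f x)
    (A : Set Ω) (hA : MeasurableSet A) (hPA : α ≤ (P A).toReal)
    (hAint : Integrable (fun ω => |f (X ω)|) (P.restrict A))
    (heq : tailMean P (fun ω => f (X ω)) α = condExpEvent P (fun ω => f (X ω)) A) :
    P (A ∩ {ω | lowerQuantile P X α < X ω}) = 0 ∧
    (P {ω | X ω < lowerQuantile P X α} = 0 ∨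
      (0 < P {ω | X ω < lowerQuantile P X α} ∧
        P (Aᶜ ∩ {ω | X ω < lowerQuantile P X α}) = 0 ∧ (P A).toReal = α)) := by
  have hform := tailMean_formula P hα hX hf hfint hflt hfgt
  rw [hform] at heq
  simp only [condExpEvent] at heq
  set q := lowerQuantile P X α with hqdef
  set c := f q with hcdef
  have hYm : Measurable (fun ω => f (X ω)) := hf.comp hX
  set T := {ω | X ω ≤ q} with hTdef
  have hT : MeasurableSet T := hX measurableSet_Iic
  have hαpos : (0:ℝ) < α := hα.1
  have hβpos : (0:ℝ) < (P A).toReal := lt_of_lt_of_le hαpos hPA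
  set β := (P A).toReal with hβdef
  set s := (P T).toReal with hsdef
  -- integrability
  have hYintT : IntegrableOn (fun ω => f (X ω)) T P :=
    integrableOn_of_le_const hYm.aestronglyMeasurable hfint hT (fun ω hω => by
      rw [hTdef, Set.mem_setOf_eq] at hω
      rcases lt_or_eq_of_le hω with h' | h'
      · exact (hflt _ h').le
      · rw [h'])
  have hYintA : IntegrableOn (fun ω => f (X ω)) A P := by
    refine Integrable.mono' hAint hYm.aestronglyMeasurable.restrict (ae_of_all _ fun ω => ?_)
    exact le_of_eq (Real.norm_eq_abs _)
  set g : Ω → ℝ := fun ω => f (X ω) - c with hgdef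
  have hgintT : IntegrableOn g T P := hYintT.sub (integrable_const c)
  have hgintA : IntegrableOn g A P := hYintA.sub (integrable_const c)
  -- pointwise sign facts
  have hgposC : ∀ ω ∈ Tᶜ, 0 < g ω := by
    intro ω hω
    have h1 : q < X ω := not_le.mp hω
    have h2 := hfgt _ h1
    show 0 < f (X ω) - c
    linarith
  have hgnpT : ∀ ω ∈ T, g ω ≤ 0 := by
    intro ω hω
    rw [hTdef, Set.mem_setOf_eq] at hω
    show f (X ω) - c ≤ 0
    rcases lt_or_eq_of_le hω with h' | h'
    · have := hflt _ h'; linarith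
    · rw [h']; simp [hcdef]
  have hgnegLt : ∀ ω ∈ {ω | X ω < q}, g ω < 0 := by
    intro ω hω
    rw [Set.mem_setOf_eq] at hω
    have := hflt _ hω
    show f (X ω) - c < 0
    linarith
  -- key identity
  have hIAc : ∫ ω in A, g ω ∂P = (∫ ω in A, f (X ω) ∂P) - β * c := by
    rw [hgdef]
    rw [integral_sub hYintA (integrable_const c), setIntegral_const, smul_eq_mul, measureReal_def]
  have hITc : ∫ ω in T, g ω ∂P = (∫ ω in T, f (X ω) ∂P) - s * c := by
    rw [hgdef]
    rw [integral_sub hYintT (integrable_const c), setIntegral_const, smul_eq_mul, measureReal_def]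
  have hIA : (∫ ω in A, f (X ω) ∂P) = α⁻¹ * ((∫ ω in T, f (X ω) ∂P) + c * (α - s)) * β := by
    rw [heq, div_mul_cancel₀ _ (ne_of_gt hβpos)]
  have hkey : α * (∫ ω in A, g ω ∂P) = β * (∫ ω in T, g ω ∂P) := by
    rw [hIAc, hITc, hIA]
    field_simp
    ring
  -- splits
  have hU1 : (A ∩ T) ∪ (A ∩ Tᶜ) = A := by
    rw [← Set.inter_union_distrib_left, Set.union_compl_self, Set.inter_univ]
  have hU2 : (A ∩ T) ∪ (Aᶜ ∩ T) = T := by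
    rw [← Set.union_inter_distrib_right, Set.union_compl_self, Set.univ_inter]
  have hd1 : Disjoint (A ∩ T) (A ∩ Tᶜ) :=
    Disjoint.mono Set.inter_subset_right Set.inter_subset_right disjoint_compl_right
  have hd2 : Disjoint (A ∩ T) (Aᶜ ∩ T) :=
    Disjoint.mono Set.inter_subset_left Set.inter_subset_left disjoint_compl_right
  have hm1 : MeasurableSet (A ∩ Tᶜ) := hA.inter hT.compl
  have hm2 : MeasurableSet (Aᶜ ∩ T) := hA.compl.inter hT
  have hm3 : MeasurableSet (A ∩ T) := hA.inter hT
  have hi3 : IntegrableOn g (A ∩ T) P := hgintA.mono_set Set.inter_subset_left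
  have hi1 : IntegrableOn g (A ∩ Tᶜ) P := hgintA.mono_set Set.inter_subset_left
  have hi2 : IntegrableOn g (Aᶜ ∩ T) P := hgintT.mono_set Set.inter_subset_right
  have hsA : ∫ ω in A, g ω ∂P = (∫ ω in A ∩ T, g ω ∂P) + ∫ ω in A ∩ Tᶜ, g ω ∂P := by
    have h := setIntegral_union hd1 hm1 hi3 hi1
    rw [hU1] at h
    exact h
  have hsT : ∫ ω in T, g ω ∂P = (∫ ω in A ∩ T, g ω ∂P) + ∫ ω in Aᶜ ∩ T, g ω ∂P := by
    have h := setIntegral_union hd2 hm2 hi3 hi2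
    rw [hU2] at h
    exact h
  have hE1 : 0 ≤ ∫ ω in A ∩ Tᶜ, g ω ∂P :=
    setIntegral_nonneg hm1 fun ω hω => (hgposC ω hω.2).le
  have hE2 : ∫ ω in Aᶜ ∩ T, g ω ∂P ≤ 0 :=
    setIntegral_nonpos hm2 fun ω hω => hgnpT ω hω.2
  have hE3 : ∫ ω in A ∩ T, g ω ∂P ≤ 0 :=
    setIntegral_nonpos hm3 fun ω hω => hgnpT ω hω.2
  have heq2 : α * (∫ ω in A ∩ Tᶜ, g ω ∂P) - β * (∫ ω in Aᶜ ∩ T, g ω ∂P)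
      = (β - α) * (∫ ω in A ∩ T, g ω ∂P) := by
    rw [hsA, hsT] at hkey
    linear_combination hkey
  have hprod1 : 0 ≤ α * (∫ ω in A ∩ Tᶜ, g ω ∂P) := mul_nonneg hαpos.le hE1
  have hprod2 : β * (∫ ω in Aᶜ ∩ T, g ω ∂P) ≤ 0 :=
    mul_nonpos_iff.mpr (Or.inl ⟨hβpos.le, hE2⟩)
  have hprod3 : (β - α) * (∫ ω in A ∩ T, g ω ∂P) ≤ 0 :=
    mul_nonpos_iff.mpr (Or.inl ⟨sub_nonneg.2 hPA, hE3⟩)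
  have h10 : α * (∫ ω in A ∩ Tᶜ, g ω ∂P) = 0 := le_antisymm (by linarith) hprod1
  have hI1z : (∫ ω in A ∩ Tᶜ, g ω ∂P) = 0 := by
    rcases mul_eq_zero.1 h10 with h | h
    · exact absurd h hαpos.ne'
    · exact h
  have h20 : β * (∫ ω in Aᶜ ∩ T, g ω ∂P) = 0 := by linarith
  have hI2z : (∫ ω in Aᶜ ∩ T, g ω ∂P) = 0 := by
    rcases mul_eq_zero.1 h20 with h | h
    · exact absurd h hβpos.ne'
    · exact h
  have h30 : (β - α) * (∫ ω in A ∩ T, g ω ∂P) = 0 := by linarith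
  -- conclusions
  have hgoal1 : P (A ∩ {ω | q < X ω}) = 0 := by
    have hset : A ∩ {ω | q < X ω} = A ∩ Tᶜ := by
      ext ω
      simp only [Set.mem_inter_iff, Set.mem_setOf_eq, Set.mem_compl_iff, hTdef, not_le]
    rw [hset]
    exact null_subset_of_setIntegral_zero hm1 subset_rfl (fun ω hω => (hgposC ω hω.2).le)
      (fun ω hω => hgposC ω hω.2) hi1 hI1z
  have hgoal2b : P (Aᶜ ∩ {ω | X ω < q}) = 0 := by
    refine null_subset_of_setIntegral_zero (g := fun ω => -g ω) hm2
      (fun ω hω => ⟨hω.1, by rw [hTdef]; exact Set.mem_setOf_eq ▸ le_of_lt hω.2⟩)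
      (fun ω hω => neg_nonneg.2 (hgnpT ω hω.2)) (fun ω hω => neg_pos.2 (hgnegLt ω hω.2))
      hi2.neg ?_
    rw [integral_neg, hI2z, neg_zero]
  refine ⟨hgoal1, ?_⟩
  by_cases hP0 : P {ω | X ω < q} = 0
  · exact Or.inl hP0
  · refine Or.inr ⟨zero_lt_iff.mpr hP0, hgoal2b, ?_⟩
    have hITg : ∫ ω in T, g ω ∂P = ∫ ω in A ∩ T, g ω ∂P := by
      rw [hsT, hI2z, add_zero]
    have hI3ne : (∫ ω in A ∩ T, g ω ∂P) ≠ 0 := by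
      intro hzero
      refine hP0 ?_
      refine null_subset_of_setIntegral_zero (g := fun ω => -g ω) hT
        (fun ω hω => by rw [hTdef]; exact Set.mem_setOf_eq ▸ le_of_lt hω)
        (fun ω hω => neg_nonneg.2 (hgnpT ω hω)) (fun ω hω => neg_pos.2 (hgnegLt ω hω))
        hgintT.neg ?_
      rw [integral_neg, hITg, hzero, neg_zero]
    have hβα : β - α = 0 := by
      rcases mul_eq_zero.1 h30 with h | h
      · exact h
      · exact absurd h hI3ne
    linarith

end
end

section
/- Let α ∈ (0,1) and let X be a real-valued random variable on a probability space (Ω,𝒜,P) with E[X⁻] < ∞. Then the upper tail conditional expectation, lower tail conditional expectation, and Expected Shortfall are ordered: TCE^α(X) ≤ TCE_α(X) ≤ ES_α(X). -/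
open MeasureTheory ProbabilityTheory Filter
open scoped Classical
open scoped Topology

noncomputable section

variable {Ω : Type*} [MeasurableSpace Ω]

lemma F_mono (P : Measure Ω) [IsProbabilityMeasure P] (X : Ω → ℝ) :
    Monotone (fun x => (P {ω | X ω ≤ x}).toReal) := fun a b hab =>
  ENNReal.toReal_mono (measure_ne_top _ _)
    (measure_mono fun ω (h : X ω ≤ a) => le_trans h hab)

lemma F_tendsto_top (P : Measure Ω) [IsProbabilityMeasure P] (X : Ω → ℝ) :
    Tendsto (fun x : ℝ => (P {ω | X ω ≤ x}).toReal) atTop (𝓝 1) := by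
  have h := tendsto_measure_iUnion_atTop (μ := P) (s := fun x : ℝ => {ω | X ω ≤ x})
    (fun a b hab ω (h : X ω ≤ a) => le_trans h hab)
  have hU : (⋃ x : ℝ, {ω | X ω ≤ x}) = Set.univ := by
    ext ω; simp only [Set.mem_iUnion, Set.mem_setOf_eq, Set.mem_univ, iff_true]
    exact ⟨X ω, le_refl _⟩
  rw [hU, measure_univ] at h
  have h2 := (ENNReal.tendsto_toReal (by norm_num : (1:ENNReal) ≠ ⊤)).comp h
  simpa [Function.comp_def] using h2

lemma F_tendsto_bot (P : Measure Ω) [IsProbabilityMeasure P] (X : Ω → ℝ)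
    (hX : Measurable X) :
    Tendsto (fun x : ℝ => (P {ω | X ω ≤ x}).toReal) atBot (𝓝 0) := by
  have h := tendsto_measure_iInter_atBot (μ := P) (s := fun x : ℝ => {ω | X ω ≤ x})
    (fun x => (hX measurableSet_Iic).nullMeasurableSet)
    (fun a b hab ω (h : X ω ≤ a) => le_trans h hab)
    ⟨0, measure_ne_top _ _⟩
  have hI : (⋂ x : ℝ, {ω | X ω ≤ x}) = (∅ : Set Ω) := by
    ext ω; simp only [Set.mem_iInter, Set.mem_setOf_eq, Set.mem_empty_iff_false, iff_false]
    intro hall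
    exact absurd (hall (X ω - 1)) (by linarith)
  rw [hI, measure_empty] at h
  have h2 := (ENNReal.tendsto_toReal (by norm_num : (0:ENNReal) ≠ ⊤)).comp h
  simpa [Function.comp_def] using h2

lemma quantile_set_nonempty (P : Measure Ω) [IsProbabilityMeasure P] (X : Ω → ℝ)
    {α : ℝ} (hα : α < 1) :
    ∃ x : ℝ, α < (P {ω | X ω ≤ x}).toReal :=
  ((F_tendsto_top P X).eventually (eventually_gt_nhds hα)).exists

lemma quantile_set_bddBelow (P : Measure Ω) [IsProbabilityMeasure P] (X : Ω → ℝ)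
    (hX : Measurable X) {α : ℝ} (hα : 0 < α) :
    BddBelow {x : ℝ | α ≤ (P {ω | X ω ≤ x}).toReal} := by
  obtain ⟨x₀, hx₀⟩ := ((F_tendsto_bot P X hX).eventually (eventually_lt_nhds hα)).exists
  refine ⟨x₀, fun y hy => ?_⟩
  by_contra hlt
  push_neg at hlt
  exact absurd (le_trans hy (F_mono P X hlt.le)) (not_le.2 hx₀)

lemma alpha_le_F_lowerQuantile (P : Measure Ω) [IsProbabilityMeasure P] (X : Ω → ℝ)
    (hX : Measurable X) {α : ℝ} (hα : α ∈ Set.Ioo (0:ℝ) 1) :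
    α ≤ (P {ω | X ω ≤ lowerQuantile P X α}).toReal := by
  set S := {x : ℝ | α ≤ (P {ω | X ω ≤ x}).toReal} with hS
  set q := sInf S with hq
  obtain ⟨x1, hx1⟩ := quantile_set_nonempty P X hα.2
  have hSne : S.Nonempty := ⟨x1, hx1.le⟩
  have hSbdd := quantile_set_bddBelow P X hX hα.1
  -- for each n, F (q + 1/(n+1)) ≥ α
  have hstep : ∀ n : ℕ, α ≤ (P {ω | X ω ≤ q + 1/(n+1)}).toReal := by
    intro n
    have hpos : (0:ℝ) < 1/(n+1) := by positivity
    have : q < q + 1/(n+1) := by linarith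
    obtain ⟨x, hxS, hxlt⟩ := (csInf_lt_iff hSbdd hSne).1 this
    exact le_trans hxS (F_mono P X hxlt.le)
  have hIeq : {ω | X ω ≤ q} = ⋂ n : ℕ, {ω | X ω ≤ q + 1/(n+1)} := by
    ext ω
    simp only [Set.mem_iInter, Set.mem_setOf_eq]
    constructor
    · intro h n
      have hp : (0:ℝ) < 1/((n:ℝ)+1) := by positivity
      linarith
    · intro h
      refine le_of_forall_pos_le_add fun ε hε => ?_
      obtain ⟨n, hn⟩ := exists_nat_one_div_lt hε
      exact le_trans (h n) (by linarith [hn])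
  have htend := tendsto_measure_iInter_atTop (μ := P)
    (s := fun n : ℕ => {ω | X ω ≤ q + 1/(n+1)})
    (fun n => (hX measurableSet_Iic).nullMeasurableSet)
    (fun a b hab ω (h : X ω ≤ q + 1/(b+1)) => le_trans h (by
      have h2 : (1:ℝ)/(b+1) ≤ 1/(a+1) := by
        apply one_div_le_one_div_of_le (by positivity)
        exact_mod_cast add_le_add_left (Nat.cast_le.2 hab) 1
      linarith))
    ⟨0, measure_ne_top _ _⟩
  rw [← hIeq] at htend
  have htend2 := (ENNReal.tendsto_toReal (measure_ne_top P _)).comp htend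
  exact ge_of_tendsto' htend2 (fun n => hstep n)

lemma lowerQuantile_le_upper (P : Measure Ω) [IsProbabilityMeasure P] (X : Ω → ℝ)
    (hX : Measurable X) {α : ℝ} (hα : α ∈ Set.Ioo (0:ℝ) 1) :
    lowerQuantile P X α ≤ sInf {x : ℝ | α < (P {ω | X ω ≤ x}).toReal} := by
  obtain ⟨x1, hx1⟩ := quantile_set_nonempty P X hα.2
  exact csInf_le_csInf (quantile_set_bddBelow P X hX hα.1) ⟨x1, hx1⟩
    (fun x hx => show α ≤ _ from le_of_lt hx)

lemma integrableOn_le_const (P : Measure Ω) [IsProbabilityMeasure P] (X : Ω → ℝ)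
    (hX : Measurable X) (hXint : Integrable (fun ω => max (-(X ω)) 0) P) (c : ℝ) :
    IntegrableOn X {ω | X ω ≤ c} P := by
  have hmeas : MeasurableSet {ω | X ω ≤ c} := hX measurableSet_Iic
  refine Integrable.mono' ((integrable_const (max c 0)).add hXint.restrict)
    hX.aestronglyMeasurable.restrict ?_
  rw [ae_restrict_iff' hmeas]
  refine ae_of_all _ fun ω hω => ?_
  simp only [Set.mem_setOf_eq] at hω
  simp only [Pi.add_apply]
  rw [Real.norm_eq_abs]
  rcases abs_cases (X ω) with ⟨h1, h2⟩ | ⟨h1, h2⟩ <;>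
    nlinarith [le_max_left c 0, le_max_right c 0, le_max_left (-(X ω)) 0,
      le_max_right (-(X ω)) 0]

/-- TCE^α ≤ TCE_α ≤ ES_α. -/
theorem tce_le_es (P : Measure Ω) [IsProbabilityMeasure P] (α : ℝ)
    (hα : α ∈ Set.Ioo (0:ℝ) 1)
    (X : Ω → ℝ) (hX : Measurable X)
    (hXint : Integrable (fun ω => max (-(X ω)) 0) P) :
    TCEup P X α ≤ TCElow P X α ∧ TCElow P X α ≤ ES P X α := by

  obtain ⟨hα0, hα1⟩ := hα
  set q := lowerQuantile P X α with hqdef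
  set q' := upperQuantile P X α with hq'def
  have hqq' : q ≤ q' := lowerQuantile_le_upper P X hX ⟨hα0, hα1⟩
  set A := {ω | X ω ≤ q} with hA
  set A' := {ω | X ω ≤ q'} with hA'
  have hmA : MeasurableSet A := hX measurableSet_Iic
  have hmA' : MeasurableSet A' := hX measurableSet_Iic
  have hαA : α ≤ (P A).toReal := alpha_le_F_lowerQuantile P X hX ⟨hα0, hα1⟩
  have hpA : 0 < (P A).toReal := lt_of_lt_of_le hα0 hαA
  have hsub : A ⊆ A' := fun ω h => le_trans h hqq'
  set D := A' \ A with hD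
  have hmD : MeasurableSet D := hmA'.diff hmA
  have hintA : IntegrableOn X A P := integrableOn_le_const P X hX hXint q
  have hintA' : IntegrableOn X A' P := integrableOn_le_const P X hX hXint q'
  have hintD : IntegrableOn X D P := hintA'.mono_set Set.diff_subset
  have hpD : 0 ≤ (P D).toReal := ENNReal.toReal_nonneg
  have hPA' : (P A').toReal = (P A).toReal + (P D).toReal := by
    rw [← ENNReal.toReal_add (measure_ne_top _ _) (measure_ne_top _ _),
      ← measure_union Set.disjoint_sdiff_right hmD, Set.union_diff_cancel hsub]
  set a := ∫ ω in A, X ω ∂P with ha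
  set d := ∫ ω in D, X ω ∂P with hd
  have hint_split : ∫ ω in A', X ω ∂P = a + d := by
    rw [← Set.union_diff_cancel hsub]
    exact setIntegral_union Set.disjoint_sdiff_right hmD hintA hintD
  have ha_le : a ≤ q * (P A).toReal := by
    have h := setIntegral_mono_on hintA
      integrableOn_const hmA
      (fun ω hω => (hω : X ω ≤ q))
    rwa [setIntegral_const, smul_eq_mul, mul_comm] at h
  have hd_ge : q * (P D).toReal ≤ d := by
    have h := setIntegral_mono_on
      integrableOn_const hintD hmD
      (fun ω hω => le_of_lt (not_le.1 hω.2))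
    rwa [setIntegral_const, smul_eq_mul, mul_comm] at h
  constructor
  · show -((∫ ω in A', X ω ∂P) / (P A').toReal) ≤ -(a / (P A).toReal)
    rw [neg_le_neg_iff, hint_split, hPA',
      div_le_div_iff₀ hpA (by linarith)]
    nlinarith [ha_le, hd_ge, hpD, hpA]
  · show -(a / (P A).toReal) ≤ -(α⁻¹ * (a + q * (α - (P A).toReal)))
    rw [neg_le_neg_iff, inv_mul_eq_div, div_le_div_iff₀ hα0 hpA]
    nlinarith [mul_le_mul_of_nonneg_left ha_le (sub_nonneg.2 hαA)]


end
end

section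
/- Let α ∈ (0,1) and let X be a real-valued random variable on a probability space (Ω,𝒜,P) with E[X⁻] < ∞. Then P[X ≤ x_{(α)}] = α or P[X < x_{(α)}] = 0 holds if and only if ES_α(X) = TCE_α(X). -/
open MeasureTheory ProbabilityTheory Filter
open scoped Classical

noncomputable section

variable {Ω : Type*} [MeasurableSpace Ω]

/-- ES_α = TCE_α iff P[X ≤ x_(α)] = α or P[X < x_(α)] = 0. -/
theorem es_eq_tcelow_iff (P : Measure Ω) [IsProbabilityMeasure P] (α : ℝ)
    (hα : α ∈ Set.Ioo (0:ℝ) 1)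
    (X : Ω → ℝ) (hX : Measurable X)
    (hXint : Integrable (fun ω => max (-(X ω)) 0) P) :
    ((P {ω | X ω ≤ lowerQuantile P X α}).toReal = α ∨
      P {ω | X ω < lowerQuantile P X α} = 0) ↔
    ES P X α = TCElow P X α := by
  obtain ⟨hα0, hα1⟩ := hα
  set S : Set ℝ := {x : ℝ | α ≤ (P {ω | X ω ≤ x}).toReal} with hS
  -- S is nonempty
  have hSne : S.Nonempty := by
    have hmono : Monotone (fun n : ℕ => {ω | X ω ≤ (n : ℝ)}) := by
      intro m n hmn ω hω
      have h1 : X ω ≤ (m : ℝ) := hω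
      have h2 : (m : ℝ) ≤ n := by exact_mod_cast hmn
      exact le_trans h1 h2
    have htend := tendsto_measure_iUnion_atTop (μ := P) hmono
    have hUn : (⋃ n : ℕ, {ω | X ω ≤ (n : ℝ)}) = Set.univ := by
      ext ω; simp only [Set.mem_iUnion, Set.mem_univ, iff_true, Set.mem_setOf_eq]
      obtain ⟨n, hn⟩ := exists_nat_ge (X ω)
      exact ⟨n, hn⟩
    rw [hUn, measure_univ] at htend
    have : ∀ᶠ n : ℕ in atTop, ENNReal.ofReal α < P {ω | X ω ≤ (n : ℝ)} := by
      refine htend.eventually_const_lt ?_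
      exact ENNReal.ofReal_lt_one.mpr hα1
    obtain ⟨n, hn⟩ := this.exists
    exact ⟨(n : ℝ), (ENNReal.ofReal_le_iff_le_toReal (measure_ne_top P _)).mp hn.le⟩
  -- S is bounded below
  have hSbdd : BddBelow S := by
    have hanti : Antitone (fun n : ℕ => {ω | X ω ≤ -(n : ℝ)}) := by
      intro m n hmn ω hω
      have h1 : X ω ≤ -(n : ℝ) := hω
      have h2 : (m : ℝ) ≤ n := by exact_mod_cast hmn
      show X ω ≤ -(m : ℝ)
      linarith
    have htend := tendsto_measure_iInter_atTop (μ := P)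
      (fun n => (measurableSet_le hX measurable_const).nullMeasurableSet) hanti
      ⟨0, measure_ne_top P _⟩
    have hIn : (⋂ n : ℕ, {ω | X ω ≤ -(n : ℝ)}) = ∅ := by
      ext ω; simp only [Set.mem_iInter, Set.mem_empty_iff_false, iff_false, Set.mem_setOf_eq,
        not_forall, not_le]
      obtain ⟨n, hn⟩ := exists_nat_gt (-(X ω))
      exact ⟨n, by linarith⟩
    rw [hIn, measure_empty] at htend
    have : ∀ᶠ n : ℕ in atTop, (P {ω | X ω ≤ -(n : ℝ)} : ENNReal) < ENNReal.ofReal α := by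
      refine htend.eventually_lt_const ?_
      simpa using ENNReal.ofReal_pos.mpr hα0
    obtain ⟨n, hn⟩ := this.exists
    refine ⟨-(n : ℝ), fun x hx => ?_⟩
    by_contra hlt
    push_neg at hlt
    have hsub : {ω | X ω ≤ x} ⊆ {ω | X ω ≤ -(n : ℝ)} := fun ω hω => le_trans hω hlt.le
    have : ENNReal.ofReal α ≤ P {ω | X ω ≤ -(n : ℝ)} :=
      le_trans ((ENNReal.ofReal_le_iff_le_toReal (measure_ne_top P _)).mpr hx)
        (measure_mono hsub)
    exact absurd hn (not_lt.mpr this)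
  set q : ℝ := lowerQuantile P X α with hq
  set A : Set Ω := {ω | X ω ≤ q} with hA
  have hAm : MeasurableSet A := measurableSet_le hX measurable_const
  set p : ℝ := (P A).toReal with hp
  set I : ℝ := ∫ ω in A, X ω ∂P with hI
  -- α ≤ p
  have hαp : α ≤ p := by
    have hstep : ∀ n : ℕ, ENNReal.ofReal α ≤ P {ω | X ω ≤ q + 1 / (n + 1)} := by
      intro n
      obtain ⟨x, hxS, hxlt⟩ := Real.lt_sInf_add_pos hSne
        (by positivity : (0:ℝ) < 1 / (n + 1))
      refine le_trans ((ENNReal.ofReal_le_iff_le_toReal (measure_ne_top P _)).mpr hxS)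
        (measure_mono fun ω hω => ?_)
      exact le_trans hω hxlt.le
    have hanti : Antitone (fun n : ℕ => {ω | X ω ≤ q + 1 / (n + 1)}) := by
      intro m n hmn ω hω
      have h1 : X ω ≤ q + 1 / ((n : ℝ) + 1) := hω
      have h2 : (1 : ℝ) / ((n : ℝ) + 1) ≤ 1 / ((m : ℝ) + 1) := by
        apply one_div_le_one_div_of_le (by positivity)
        have : (m : ℝ) ≤ n := by exact_mod_cast hmn
        linarith
      show X ω ≤ q + 1 / ((m : ℝ) + 1)
      linarith
    have htend := tendsto_measure_iInter_atTop (μ := P)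
      (fun n => (measurableSet_le hX measurable_const).nullMeasurableSet) hanti
      ⟨0, measure_ne_top P _⟩
    have hInt : (⋂ n : ℕ, {ω | X ω ≤ q + 1 / (n + 1)}) = A := by
      ext ω
      simp only [Set.mem_iInter, Set.mem_setOf_eq, hA]
      constructor
      · intro h
        by_contra hlt
        push_neg at hlt
        obtain ⟨n, hn⟩ := exists_nat_one_div_lt (by linarith : (0:ℝ) < X ω - q)
        have := h n
        rw [div_lt_iff₀ (by positivity)] at hn
        have hn' : 1 / ((n:ℝ) + 1) < X ω - q := by
          rw [div_lt_iff₀ (by positivity)]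
          linarith [hn]
        linarith [this, hn']
      · intro h n
        have : (0:ℝ) < 1 / (n + 1) := by positivity
        linarith
    rw [hInt] at htend
    have : ENNReal.ofReal α ≤ P A := ge_of_tendsto' htend hstep
    exact (ENNReal.ofReal_le_iff_le_toReal (measure_ne_top P _)).mp this
  have hppos : 0 < p := lt_of_lt_of_le hα0 hαp
  have hpne : p ≠ 0 := ne_of_gt hppos
  have hαne : α ≠ 0 := ne_of_gt hα0
  -- integrability of X on A
  have hXA : IntegrableOn X A P := by
    refine Integrable.mono' (g := fun ω => max (-(X ω)) 0 + |q|)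
      ((hXint.restrict).add (integrable_const _)) (hX.aestronglyMeasurable.restrict) ?_
    rw [ae_restrict_iff' hAm]
    refine Filter.Eventually.of_forall fun ω hω => ?_
    have hω' : X ω ≤ q := hω
    have h1 : -(X ω) ≤ max (-(X ω)) 0 := le_max_left _ _
    have h2 : (0:ℝ) ≤ max (-(X ω)) 0 := le_max_right _ _
    have h3 : q ≤ |q| := le_abs_self q
    have h4 : (0:ℝ) ≤ |q| := abs_nonneg q
    rw [Real.norm_eq_abs]
    show |X ω| ≤ max (-(X ω)) 0 + |q|
    rcases abs_cases (X ω) with ⟨h, _⟩ | ⟨h, _⟩ <;> linarith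
  -- I = p * q ↔ P {X < q} = 0
  have hzero : I = p * q ↔ P {ω | X ω < q} = 0 := by
    have hconstInt : IntegrableOn (fun _ : Ω => q) A P :=
      (integrableOn_const_iff).mpr (Or.inr (measure_lt_top P A))
    have hsub : ∫ ω in A, (q - X ω) ∂P = p * q - I := by
      rw [integral_sub hconstInt hXA, setIntegral_const, smul_eq_mul, measureReal_def, ← hp, ← hI]
    have hnn : 0 ≤ᶠ[ae (P.restrict A)] fun ω => q - X ω := by
      rw [EventuallyLE, ae_restrict_iff' hAm]
      exact Filter.Eventually.of_forall fun ω hω => by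
        simp only [Pi.zero_apply]; have : X ω ≤ q := hω; linarith
    have hiff := integral_eq_zero_iff_of_nonneg_ae hnn (hconstInt.sub hXA)
    rw [hsub] at hiff
    have hae : ((fun ω => q - X ω) =ᶠ[ae (P.restrict A)] 0) ↔ P {ω | X ω < q} = 0 := by
      rw [EventuallyEq, ae_restrict_iff' hAm, ae_iff]
      have hset : {ω | ¬(ω ∈ A → q - X ω = (0 : Ω → ℝ) ω)} = {ω | X ω < q} := by
        ext ω
        simp only [Set.mem_setOf_eq, Pi.zero_apply, Classical.not_imp, hA]
        constructor
        · rintro ⟨h1, h2⟩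
          rcases lt_or_eq_of_le h1 with h | h
          · exact h
          · exact absurd (by linarith : q - X ω = 0) h2
        · intro h
          exact ⟨h.le, by intro hc; linarith⟩
      rw [hset]
    rw [hae] at hiff
    constructor
    · intro h; exact hiff.mp (by linarith)
    · intro h; have := hiff.mpr h; linarith
  -- the algebraic equivalence
  have hES : ES P X α = -(α⁻¹ * (I + q * (α - p))) := rfl
  have hTCE : TCElow P X α = -(I / p) := rfl
  have key : (ES P X α = TCElow P X α) ↔ (p = α ∨ I = p * q) := by
    rw [hES, hTCE, neg_inj, inv_mul_eq_div, div_eq_div_iff hαne hpne]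
    constructor
    · intro h
      have : (p - α) * (I - p * q) = 0 := by linear_combination h
      rcases mul_eq_zero.mp this with h' | h'
      · exact Or.inl (by linarith)
      · exact Or.inr (by linarith)
    · rintro (h | h) <;> · rw [h]; ring
  rw [key]
  exact or_congr Iff.rfl hzero.symm


end
end
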